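/- Let ε ∈ (0,1] and β ∈ [0,1], and let q_β := 1/2 − (2βε/(8+4ε) + (1−β)ε/(8+2ε)). Then Exploit_{2ε}(q_β) ≥ (2ε/15)(1−β) and Exploit_ε(q_β) ≥ (2ε/15)β. -/

import Mathlib

/-- Exploitability of the column strategy `q` in the perturbed Matching Pennies game
with payoff matrix `[[1+Δ, −1], [−1, 1]]`:
`Exploit_Δ(q) := max{(2+Δ)q − 1, 1 − 2q} − v_Δ` with Nash value `v_Δ := (Δ/2)/(2+Δ/2)`. -/
noncomputable def exploit (Δ q : ℝ) : ℝ :=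
  max ((2 + Δ) * q - 1) (1 - 2 * q) - (Δ / 2) / (2 + Δ / 2)

/-- for ε ∈ (0,1], β ∈ [0,1] and
`q_β := 1/2 − (2βε/(8+4ε) + (1−β)ε/(8+2ε))`, one has
`Exploit_{2ε}(q_β) ≥ (2ε/15)(1−β)` and `Exploit_ε(q_β) ≥ (2ε/15)β`. -/
theorem stmt_8 (ε : ℝ) (hε : ε ∈ Set.Ioc (0 : ℝ) 1) (β : ℝ) (hβ : β ∈ Set.Icc (0 : ℝ) 1)
    (q : ℝ) (hq : q = 1 / 2 - (2 * β * ε / (8 + 4 * ε) + (1 - β) * ε / (8 + 2 * ε))) :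
    (2 * ε / 15) * (1 - β) ≤ exploit (2 * ε) q ∧
    (2 * ε / 15) * β ≤ exploit ε q := by
  obtain ⟨hε0, hε1⟩ := hε
  obtain ⟨hβ0, hβ1⟩ := hβ
  have h1 : (0:ℝ) < 8 + 4 * ε := by linarith
  have h2 : (0:ℝ) < 8 + 2 * ε := by linarith
  have h3 : (0:ℝ) < 2 + 2 * ε / 2 := by linarith
  have h4 : (0:ℝ) < 2 + ε / 2 := by linarith
  subst hq
  constructor
  · have hle : (2 + 2 * ε) * (1 / 2 - (2 * β * ε / (8 + 4 * ε) + (1 - β) * ε / (8 + 2 * ε))) - 1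
        - (2 * ε / 2) / (2 + 2 * ε / 2) ≤ exploit (2 * ε) (1 / 2 - (2 * β * ε / (8 + 4 * ε) + (1 - β) * ε / (8 + 2 * ε))) := by
      unfold exploit
      gcongr
      exact le_max_left _ _
    refine le_trans ?_ hle
    rw [div_add_div _ _ (ne_of_gt h1) (ne_of_gt h2), ← sub_nonneg]
    field_simp
    nlinarith [mul_nonneg (mul_nonneg hε0.le hε0.le) (sub_nonneg.2 hβ1),
      mul_nonneg hε0.le (sub_nonneg.2 hβ1), sq_nonneg ε, mul_pos hε0 hε0,
      mul_nonneg (mul_nonneg (mul_nonneg hε0.le hε0.le) hε0.le) (sub_nonneg.2 hβ1)]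
  · have hle : 1 - 2 * (1 / 2 - (2 * β * ε / (8 + 4 * ε) + (1 - β) * ε / (8 + 2 * ε)))
        - (ε / 2) / (2 + ε / 2) ≤ exploit ε (1 / 2 - (2 * β * ε / (8 + 4 * ε) + (1 - β) * ε / (8 + 2 * ε))) := by
      unfold exploit
      gcongr
      exact le_max_right _ _
    refine le_trans ?_ hle
    rw [div_add_div _ _ (ne_of_gt h1) (ne_of_gt h2), ← sub_nonneg]
    field_simp
    nlinarith [mul_nonneg hε0.le hβ0, mul_nonneg (mul_nonneg hε0.le hε0.le) hβ0,
        mul_nonneg (mul_nonneg (mul_nonneg hε0.le hε0.le) hε0.le) hβ0, sq_nonneg ε]
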